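/- arXiv:1703.08995 — 5 statements merged into one kernel-verified Lean document; each statement's English description precedes it below -/
import Mathlib

section
/- If I ∈ ℝ^{q×(p+1)} has full column rank p+1 and its first column is the all-ones vector, and b ∈ ℝ^q, then the function f(β̃) = log(∑_{i=1}^q e^{b_i} exp((𝙸β̃)_i)) is strictly convex on ℝ^p, where 𝙸 is I with its first column removed. -/
open Finset Real

/-- Strict weighted AM-GM for two numbers. -/
lemma young_strict {u v a c : ℝ} (hu : 0 < u) (hv : 0 < v) (ha : 0 < a) (hc : 0 < c)
    (hac : a + c = 1) (huv : u ≠ v) : u ^ a * v ^ c < a * u + c * v := by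
  have h := strictConcaveOn_log_Ioi.2 (Set.mem_Ioi.2 hu) (Set.mem_Ioi.2 hv) huv ha hc hac
  calc u ^ a * v ^ c = Real.exp (a * Real.log u + c * Real.log v) := by
        rw [Real.exp_add, Real.rpow_def_of_pos hu, Real.rpow_def_of_pos hv]; ring_nf
    _ < Real.exp (Real.log (a * u + c * v)) := by
        apply Real.exp_lt_exp.2
        simpa [smul_eq_mul] using h
    _ = a * u + c * v := Real.exp_log (by positivity)

lemma young_le {u v a c : ℝ} (hu : 0 < u) (hv : 0 < v) (ha : 0 < a) (hc : 0 < c)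
    (hac : a + c = 1) : u ^ a * v ^ c ≤ a * u + c * v := by
  rcases eq_or_ne u v with rfl | h
  · rw [← Real.rpow_add hu, hac, Real.rpow_one]; nlinarith
  · exact (young_strict hu hv ha hc hac h).le

/-- If `I` is a real `q × (p+1)` matrix of full column rank whose first column is all ones,
and `b ∈ ℝ^q`, then `f(β̃) = log (∑ i, e^{b i} exp ((𝙸 β̃) i))` is strictly convex on `ℝ^p`,
where `𝙸` is `I` with its first column removed. -/
theorem f_strictConvex (p q : ℕ) (I : Matrix (Fin q) (Fin (p + 1)) ℝ)
    (hrank : Function.Injective I.mulVec)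
    (hones : ∀ i, I i 0 = 1) (b : Fin q → ℝ) :
    StrictConvexOn ℝ Set.univ
      (fun β : Fin p → ℝ =>
        Real.log (∑ i, Real.exp (b i) * Real.exp (∑ j : Fin p, I i j.succ * β j))) := by
  constructor
  · exact convex_univ
  intro β₁ _ β₂ _ hne a c ha hc hac
  have hq : (Finset.univ : Finset (Fin q)).Nonempty := by
    rcases Nat.eq_zero_or_pos q with h | h
    · exfalso
      subst h
      have h10 : I.mulVec (fun _ => (1:ℝ)) = I.mulVec 0 := by funext i; exact i.elim0
      have h2 := congrFun (hrank h10) 0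
      simp at h2
    · exact ⟨⟨0, h⟩, Finset.mem_univ _⟩
  set x : Fin q → ℝ := fun i => b i + ∑ j, I i j.succ * β₁ j with hxdef
  set y : Fin q → ℝ := fun i => b i + ∑ j, I i j.succ * β₂ j with hydef
  set X : ℝ := ∑ i, Real.exp (x i) with hXdef
  set Y : ℝ := ∑ i, Real.exp (y i) with hYdef
  have hX : 0 < X := Finset.sum_pos (fun i _ => Real.exp_pos _) hq
  have hY : 0 < Y := Finset.sum_pos (fun i _ => Real.exp_pos _) hq
  -- witness for strictness
  have hwit : ∃ i, Real.exp (x i) / X ≠ Real.exp (y i) / Y := by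
    by_contra h
    push_neg at h
    apply hne
    have hcv : ∀ i, x i - y i = Real.log X - Real.log Y := by
      intro i
      have h1 : Real.log (Real.exp (x i) / X) = Real.log (Real.exp (y i) / Y) := by rw [h i]
      rw [Real.log_div (Real.exp_ne_zero _) hX.ne', Real.log_div (Real.exp_ne_zero _) hY.ne',
        Real.log_exp, Real.log_exp] at h1
      linarith
    set v : Fin (p + 1) → ℝ := Fin.cons (Real.log Y - Real.log X) (fun j => β₁ j - β₂ j)
      with hvdef
    have hm : I.mulVec v = I.mulVec 0 := by
      funext i
      rw [Matrix.mulVec_zero]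
      simp only [Matrix.mulVec, dotProduct, Pi.zero_apply]
      rw [Fin.sum_univ_succ]
      simp only [hvdef, Fin.cons_zero, Fin.cons_succ, hones i]
      have hsub : ∑ j : Fin p, I i j.succ * (β₁ j - β₂ j)
          = (∑ j : Fin p, I i j.succ * β₁ j) - ∑ j : Fin p, I i j.succ * β₂ j := by
        rw [← Finset.sum_sub_distrib]
        exact Finset.sum_congr rfl fun j _ => by ring
      rw [hsub]
      have := hcv i
      simp only [hxdef, hydef] at this
      linarith
    have hv0 := hrank hm
    funext j
    have := congrFun hv0 j.succ
    simp only [hvdef, Fin.cons_succ, Pi.zero_apply] at this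
    linarith
  obtain ⟨i₀, hi₀⟩ := hwit
  -- Hölder step
  have key : (∑ i, Real.exp (x i) ^ a * Real.exp (y i) ^ c) < X ^ a * Y ^ c := by
    have h1 : ∀ i ∈ (Finset.univ : Finset (Fin q)),
        (Real.exp (x i) / X) ^ a * (Real.exp (y i) / Y) ^ c
          ≤ a * (Real.exp (x i) / X) + c * (Real.exp (y i) / Y) :=
      fun i _ => young_le (by positivity) (by positivity) ha hc hac
    have h2 : ∃ i ∈ (Finset.univ : Finset (Fin q)),
        (Real.exp (x i) / X) ^ a * (Real.exp (y i) / Y) ^ c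
          < a * (Real.exp (x i) / X) + c * (Real.exp (y i) / Y) :=
      ⟨i₀, Finset.mem_univ _, young_strict (by positivity) (by positivity) ha hc hac hi₀⟩
    have h3 := Finset.sum_lt_sum h1 h2
    have hrhs : (∑ i, (a * (Real.exp (x i) / X) + c * (Real.exp (y i) / Y))) = 1 := by
      rw [Finset.sum_add_distrib, ← Finset.mul_sum, ← Finset.mul_sum,
        ← Finset.sum_div, ← Finset.sum_div, ← hXdef, ← hYdef,
        div_self hX.ne', div_self hY.ne']
      linarith
    have hlhs : (∑ i, (Real.exp (x i) / X) ^ a * (Real.exp (y i) / Y) ^ c)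
        = (∑ i, Real.exp (x i) ^ a * Real.exp (y i) ^ c) / (X ^ a * Y ^ c) := by
      rw [Finset.sum_div]
      refine Finset.sum_congr rfl fun i _ => ?_
      rw [Real.div_rpow (Real.exp_pos _).le hX.le, Real.div_rpow (Real.exp_pos _).le hY.le,
        div_mul_div_comm]
    rw [hrhs, hlhs] at h3
    have hXY : 0 < X ^ a * Y ^ c := by positivity
    exact (div_lt_one hXY).1 h3
  -- assemble
  simp only [smul_eq_mul]
  have hmid : ∀ i, b i + ∑ j, I i j.succ * (a • β₁ + c • β₂) j = a * x i + c * y i := by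
    intro i
    simp only [Pi.add_apply, Pi.smul_apply, smul_eq_mul, hxdef, hydef]
    have : ∑ j, I i j.succ * (a * β₁ j + c * β₂ j)
        = a * ∑ j, I i j.succ * β₁ j + c * ∑ j, I i j.succ * β₂ j := by
      rw [Finset.mul_sum, Finset.mul_sum, ← Finset.sum_add_distrib]
      exact Finset.sum_congr rfl fun j _ => by ring
    rw [this]; linear_combination (-(b i)) * hac
  have hL : (∑ i, Real.exp (b i) * Real.exp (∑ j : Fin p, I i j.succ * (a • β₁ + c • β₂) j))
      = ∑ i, Real.exp (x i) ^ a * Real.exp (y i) ^ c := by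
    refine Finset.sum_congr rfl fun i _ => ?_
    rw [← Real.exp_add, hmid i, Real.rpow_def_of_pos (Real.exp_pos _),
      Real.rpow_def_of_pos (Real.exp_pos _), ← Real.exp_add, Real.log_exp, Real.log_exp]
    ring_nf
  have hX' : (∑ i, Real.exp (b i) * Real.exp (∑ j : Fin p, I i j.succ * β₁ j)) = X := by
    refine Finset.sum_congr rfl fun i _ => ?_
    rw [← Real.exp_add]
  have hY' : (∑ i, Real.exp (b i) * Real.exp (∑ j : Fin p, I i j.succ * β₂ j)) = Y := by
    refine Finset.sum_congr rfl fun i _ => ?_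
    rw [← Real.exp_add]
  rw [hL, hX', hY']
  calc Real.log (∑ i, Real.exp (x i) ^ a * Real.exp (y i) ^ c)
      < Real.log (X ^ a * Y ^ c) := by
        apply Real.log_lt_log _ key
        exact Finset.sum_pos (fun i _ => by positivity) hq
    _ = a * Real.log X + c * Real.log Y := by
        rw [Real.log_mul (by positivity) (by positivity), Real.log_rpow hX, Real.log_rpow hY]
end

section
/- The binary logistic regression problem with binary full-rank design matrices I₁ ∈ {0,1}^{q₁×(p+1)} and I₀ ∈ {0,1}^{q₀×(p+1)} satisfies the Silvapulle overlap condition (the open cones C₁ = {I₁^T u : u ∈ (ℝ₊*)^{q₁}} and C₀ = {I₀^T u : u ∈ (ℝ₊*)^{q₀}} intersect) if and only if there exist vectors of positive integers n⁺ ∈ (ℕ*)^{q₁} and n* ∈ (ℕ*)^{q₀} with I₁^T n⁺ = I₀^T n*. -/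
open Matrix in
lemma li_cast {ι ν : Type*} [Fintype ι] [DecidableEq ι] [Fintype ν] [DecidableEq ν]
    (v : ι → ν → ℚ) (hv : LinearIndependent ℚ v) :
    LinearIndependent ℝ (fun j t => ((v j t : ℝ))) := by
  set M : Matrix ν ι ℚ := Matrix.of fun t j => v j t with hM
  have h1 : Function.Injective M.mulVec := by
    rw [Matrix.mulVec_injective_iff]
    exact hv
  have h2 : LinearMap.ker (Mᵀ * M).mulVecLin = ⊥ := by
    rw [Matrix.ker_mulVecLin_transpose_mul_self]
    exact LinearMap.ker_eq_bot.mpr h1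
  have h3 : IsUnit (Mᵀ * M) := by
    rw [← Matrix.mulVec_injective_iff_isUnit]
    exact LinearMap.ker_eq_bot.mp h2
  have hdet : (Mᵀ * M).det ≠ 0 := by
    intro h
    exact (Matrix.isUnit_iff_isUnit_det _ |>.mp h3).ne_zero (by rw [h])
  set M' : Matrix ν ι ℝ := M.map (Rat.cast) with hM'
  have hdet' : (M'ᵀ * M').det ≠ 0 := by
    have : M'ᵀ * M' = (Mᵀ * M).map (Rat.cast) := by
      rw [hM', ← Matrix.transpose_map]
      exact (Matrix.map_mul (f := (Rat.castHom ℝ))).symm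
    have h8 : (Mᵀ * M).map Rat.cast = (Rat.castHom ℝ).mapMatrix (Mᵀ * M) := rfl
    rw [this, h8, ← RingHom.map_det]
    exact_mod_cast Rat.cast_ne_zero.mpr hdet
  have h4 : Function.Injective M'.mulVec := by
    have h5 : IsUnit (M'ᵀ * M') := (Matrix.isUnit_iff_isUnit_det _).mpr (isUnit_iff_ne_zero.mpr hdet')
    have h6 := Matrix.mulVec_injective_iff_isUnit.mpr h5
    have h7 : LinearMap.ker (M'ᵀ * M').mulVecLin = ⊥ := LinearMap.ker_eq_bot.mpr h6
    rw [Matrix.ker_mulVecLin_transpose_mul_self] at h7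
    exact LinearMap.ker_eq_bot.mp h7
  rw [Matrix.mulVec_injective_iff] at h4
  exact h4

open Matrix in
lemma rat_pos_solution {μ ν : Type*} [Fintype μ] [DecidableEq μ] [Fintype ν] [DecidableEq ν]
    (A : Matrix μ ν ℚ) (x : ν → ℝ)
    (hx : (A.map Rat.cast).mulVec x = 0) (hpos : ∀ t, 0 < x t) :
    ∃ q : ν → ℚ, (∀ t, 0 < q t) ∧ A.mulVec q = 0 := by
  rcases isEmpty_or_nonempty ν with hν | hν
  · refine ⟨fun _ => 1, fun t => one_pos, ?_⟩
    funext j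
    simp [Matrix.mulVec, dotProduct]
  set K := LinearMap.ker A.mulVecLin with hKdef
  obtain ⟨K', hcompl⟩ := Submodule.exists_isCompl K
  let bK := Module.finBasis ℚ K
  let bK' := Module.finBasis ℚ K'
  let bfull : Module.Basis _ ℚ (ν → ℚ) :=
    (bK.prod bK').map (Submodule.prodEquivOfIsCompl K K' hcompl)
  set e : _ → ν → ℚ := fun s => bfull s with he
  have hinl : ∀ i, e (Sum.inl i) ∈ K := by
    intro i
    have : e (Sum.inl i) = ((bK i : ν → ℚ)) + ((0 : K') : ν → ℚ) := by
      rw [he]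
      simp only [bfull, Module.Basis.map_apply, Submodule.coe_prodEquivOfIsCompl']
      rw [Module.Basis.prod_apply_inl_fst, Module.Basis.prod_apply_inl_snd]
    rw [this]
    simpa using (bK i).2
  have hinr : ∀ i, e (Sum.inr i) ∈ K' := by
    intro i
    have : e (Sum.inr i) = ((0 : K) : ν → ℚ) + ((bK' i : ν → ℚ)) := by
      rw [he]
      simp only [bfull, Module.Basis.map_apply, Submodule.coe_prodEquivOfIsCompl']
      rw [Module.Basis.prod_apply_inr_fst, Module.Basis.prod_apply_inr_snd]
    rw [this]
    simpa using (bK' i).2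
  -- the casts of the full basis form an ℝ-basis
  set E : _ → ν → ℝ := fun s t => ((e s t : ℝ)) with hE
  have liE : LinearIndependent ℝ E := li_cast e bfull.linearIndependent
  have hcard : Fintype.card (Fin (Module.finrank ℚ K) ⊕ Fin (Module.finrank ℚ K')) =
      Module.finrank ℝ (ν → ℝ) := by
    rw [← Module.finrank_eq_card_basis bfull, Module.finrank_pi, Module.finrank_pi]
  haveI : Nonempty (Fin (Module.finrank ℚ K) ⊕ Fin (Module.finrank ℚ K')) := by
    rw [← Fintype.card_pos_iff, hcard, Module.finrank_pi]
    exact Fintype.card_pos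
  let B : Module.Basis _ ℝ (ν → ℝ) := basisOfLinearIndependentOfCardEqFinrank liE hcard
  have hB : ∀ s, B s = E s := fun s => congrFun (coe_basisOfLinearIndependentOfCardEqFinrank liE hcard) s
  set c := B.repr x with hc
  have hxsum : ∑ s, c s • E s = x := by
    conv_rhs => rw [← B.sum_repr x]
    exact Finset.sum_congr rfl fun s _ => by rw [hB]
  -- mulVec commutes with casting
  have hcomm : ∀ v : ν → ℚ, (A.map Rat.cast).mulVec (fun t => ((v t : ℝ))) =
      fun j => ((A.mulVec v j : ℚ) : ℝ) := by
    intro v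
    funext j
    exact ((Rat.castHom ℝ).map_mulVec A v j).symm
  have hKmem : ∀ w : ν → ℚ, w ∈ K ↔ A.mulVec w = 0 := fun w => LinearMap.mem_ker
  have h0 : ∑ s, c s • ((fun j => ((A.mulVec (e s) j : ℚ) : ℝ)) : μ → ℝ) = 0 := by
    have h0' : (A.map Rat.cast).mulVecLin (∑ s, c s • E s) = 0 := by
      rw [hxsum, Matrix.mulVecLin_apply, hx]
    rw [map_sum] at h0'
    rw [← h0']
    refine Finset.sum_congr rfl fun s _ => ?_
    rw [LinearMap.map_smul, Matrix.mulVecLin_apply]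
    congr 1
    exact (hcomm (e s)).symm
  -- kernel basis vectors are killed
  have hkerinl : ∀ i, A.mulVec (e (Sum.inl i)) = 0 := by
    intro i
    exact (hKmem _).mp (hinl i)
  -- the images of the complement basis vectors are ℚ-linearly independent
  set g : Fin (Module.finrank ℚ K') → μ → ℚ := fun i => A.mulVec (e (Sum.inr i)) with hg
  have lig : LinearIndependent ℚ g := by
    rw [Fintype.linearIndependent_iff]
    intro a ha
    have hy : (∑ i, a i • e (Sum.inr i)) ∈ K := by
      rw [hKmem]
      have : A.mulVecLin (∑ i, a i • e (Sum.inr i)) = 0 := by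
        rw [map_sum]
        simpa only [LinearMap.map_smul, Matrix.mulVecLin_apply] using ha
      rwa [Matrix.mulVecLin_apply] at this
    have hy' : (∑ i, a i • e (Sum.inr i)) ∈ K' :=
      Submodule.sum_mem _ fun i _ => Submodule.smul_mem _ _ (hinr i)
    have hy0 : ∑ i, a i • e (Sum.inr i) = 0 :=
      (Submodule.mem_bot ℚ).mp
        (hcompl.disjoint.le_bot (Submodule.mem_inf.mpr ⟨hy, hy'⟩))
    have liInr : LinearIndependent ℚ (e ∘ Sum.inr) :=
      bfull.linearIndependent.comp Sum.inr Sum.inr_injective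
    exact Fintype.linearIndependent_iff.mp liInr a hy0
  have liG : LinearIndependent ℝ (fun i t => ((g i t : ℝ))) := li_cast g lig
  -- coefficients on the complement part vanish
  have hcinr : ∀ i, c (Sum.inr i) = 0 := by
    rw [Fintype.sum_sum_type] at h0
    have hzero : ∑ i, c (Sum.inl i) • ((fun j => ((A.mulVec (e (Sum.inl i)) j : ℚ) : ℝ)) : μ → ℝ)
        = 0 := by
      refine Finset.sum_eq_zero fun i _ => ?_
      have hz : ((fun j => (((0 : μ → ℚ) j : ℝ))) : μ → ℝ) = 0 := by funext j; simp
      rw [hkerinl i, hz, smul_zero]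
    rw [hzero, zero_add] at h0
    exact Fintype.linearIndependent_iff.mp liG (fun i => c (Sum.inr i)) h0
  -- x is a real combination of (casts of) rational kernel vectors
  set k := fun i => e (Sum.inl i) with hk
  set γ := fun i => c (Sum.inl i) with hγ
  have hxk : x = ∑ i, γ i • (fun t => ((k i t : ℝ))) := by
    rw [← hxsum, Fintype.sum_sum_type]
    have : ∑ i, c (Sum.inr i) • E (Sum.inr i) = 0 :=
      Finset.sum_eq_zero fun i _ => by rw [hcinr i, zero_smul]
    rw [this, add_zero]
  -- rational approximation
  set δ := Finset.univ.inf' Finset.univ_nonempty x with hδdef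
  have hδpos : 0 < δ := by
    rw [hδdef, Finset.lt_inf'_iff]
    exact fun t _ => hpos t
  have hδle : ∀ t, δ ≤ x t := fun t => Finset.inf'_le _ (Finset.mem_univ t)
  set C : ℝ := (∑ i, ∑ t, |((k i t : ℝ))|) + 1 with hC
  have hCpos : 0 < C := by
    have : (0:ℝ) ≤ ∑ i, ∑ t, |((k i t : ℝ))| :=
      Finset.sum_nonneg fun i _ => Finset.sum_nonneg fun t _ => abs_nonneg _
    linarith
  set ε := δ / C with hε
  have hεpos : 0 < ε := div_pos hδpos hCpos
  have happrox : ∀ i, ∃ r : ℚ, |((r : ℝ)) - γ i| < ε := by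
    intro i
    obtain ⟨r, h1, h2⟩ := exists_rat_btwn (show γ i - ε < γ i + ε by linarith)
    exact ⟨r, abs_sub_lt_iff.mpr ⟨by linarith, by linarith⟩⟩
  choose γ' hγ' using happrox
  refine ⟨∑ i, γ' i • k i, ?_, ?_⟩
  · intro t
    have hqt : (((∑ i, γ' i • k i) t : ℚ) : ℝ) = ∑ i, ((γ' i : ℝ)) * ((k i t : ℝ)) := by
      rw [Finset.sum_apply]
      simp only [Pi.smul_apply, smul_eq_mul]
      push_cast
      rfl
    have hxt : x t = ∑ i, γ i * ((k i t : ℝ)) := by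
      rw [hxk, Finset.sum_apply]
      simp only [Pi.smul_apply, smul_eq_mul]
    have hbound : |(((∑ i, γ' i • k i) t : ℚ) : ℝ) - x t| < δ := by
      rw [hqt, hxt, ← Finset.sum_sub_distrib]
      have h1 : |∑ i, (((γ' i : ℝ)) * ((k i t : ℝ)) - γ i * ((k i t : ℝ)))|
          ≤ ∑ i, |((γ' i : ℝ)) - γ i| * |((k i t : ℝ))| := by
        refine (Finset.abs_sum_le_sum_abs _ _).trans ?_
        refine Finset.sum_le_sum fun i _ => ?_
        rw [← sub_mul, abs_mul]
      have h2 : ∑ i, |((γ' i : ℝ)) - γ i| * |((k i t : ℝ))| ≤ ε * (C - 1) := by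
        have : ∑ i, |((γ' i : ℝ)) - γ i| * |((k i t : ℝ))| ≤ ∑ i, ε * |((k i t : ℝ))| := by
          refine Finset.sum_le_sum fun i _ => ?_
          exact mul_le_mul_of_nonneg_right (hγ' i).le (abs_nonneg _)
        refine this.trans ?_
        rw [← Finset.mul_sum, hC, add_sub_cancel_right]
        refine mul_le_mul_of_nonneg_left ?_ hεpos.le
        refine Finset.sum_le_sum fun i _ => ?_
        exact Finset.single_le_sum (f := fun t' => |((k i t' : ℝ))|)
          (fun t' _ => abs_nonneg _) (Finset.mem_univ t)
      have h3 : ε * (C - 1) < ε * C := by nlinarith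
      have h4 : ε * C = δ := div_mul_cancel₀ _ hCpos.ne'
      calc |∑ i, (((γ' i : ℝ)) * ((k i t : ℝ)) - γ i * ((k i t : ℝ)))| ≤ _ := h1
        _ ≤ ε * (C - 1) := h2
        _ < δ := by rw [← h4]; exact h3
    have : (0:ℝ) < (((∑ i, γ' i • k i) t : ℚ) : ℝ) := by
      have := abs_sub_lt_iff.mp hbound
      have hx1 := hδle t
      linarith [this.2]
    exact_mod_cast this
  · have : A.mulVecLin (∑ i, γ' i • k i) = 0 := by
      rw [map_sum]
      refine Finset.sum_eq_zero fun i _ => ?_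
      rw [LinearMap.map_smul, Matrix.mulVecLin_apply,
        show A.mulVec (k i) = 0 from hkerinl i, smul_zero]
    rwa [Matrix.mulVecLin_apply] at this

/-- Silvapulle's overlap condition for binary design matrices: the open positive cones
`C₁ = {I₁ᵀ u : u > 0}` and `C₀ = {I₀ᵀ u : u > 0}` intersect if and only if there exist
vectors of positive integers `n⁺, n*` with `I₁ᵀ n⁺ = I₀ᵀ n*`. -/
theorem silvapulle_binary (p q0 q1 : ℕ)
    (I1 : Matrix (Fin q1) (Fin (p + 1)) ℝ) (I0 : Matrix (Fin q0) (Fin (p + 1)) ℝ)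
    (hb1 : ∀ i j, I1 i j = 0 ∨ I1 i j = 1) (hb0 : ∀ i j, I0 i j = 0 ∨ I0 i j = 1)
    (hr1 : Function.Injective I1.mulVec) (hr0 : Function.Injective I0.mulVec) :
    (∃ u1 : Fin q1 → ℝ, ∃ u0 : Fin q0 → ℝ,
        (∀ i, 0 < u1 i) ∧ (∀ i, 0 < u0 i) ∧
        I1.transpose.mulVec u1 = I0.transpose.mulVec u0) ↔
    (∃ nplus : Fin q1 → ℕ, ∃ nstar : Fin q0 → ℕ,
        (∀ i, 0 < nplus i) ∧ (∀ i, 0 < nstar i) ∧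
        I1.transpose.mulVec (fun i => (nplus i : ℝ)) =
          I0.transpose.mulVec (fun i => (nstar i : ℝ))) := by
  classical
  constructor
  · rintro ⟨u1, u0, hu1, hu0, heq⟩
    set b1 : Matrix (Fin q1) (Fin (p + 1)) ℚ :=
      fun i j => if I1 i j = 0 then 0 else 1 with hb1def
    set b0 : Matrix (Fin q0) (Fin (p + 1)) ℚ :=
      fun i j => if I0 i j = 0 then 0 else 1 with hb0def
    have hcast1 : ∀ i j, ((b1 i j : ℚ) : ℝ) = I1 i j := by
      intro i j
      rcases hb1 i j with h | h
      · simp [hb1def, h]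
      · rw [hb1def]
        simp only
        rw [if_neg (by rw [h]; norm_num), h]
        norm_num
    have hcast0 : ∀ i j, ((b0 i j : ℚ) : ℝ) = I0 i j := by
      intro i j
      rcases hb0 i j with h | h
      · simp [hb0def, h]
      · rw [hb0def]
        simp only
        rw [if_neg (by rw [h]; norm_num), h]
        norm_num
    set A : Matrix (Fin (p + 1)) (Fin q1 ⊕ Fin q0) ℚ :=
      Matrix.of fun j s => Sum.elim (fun i => b1 i j) (fun i => -(b0 i j)) s with hA
    have hsplit : ∀ (v1 : Fin q1 → ℝ) (v0 : Fin q0 → ℝ),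
        (A.map Rat.cast).mulVec (Sum.elim v1 v0) =
          fun j => (I1.transpose.mulVec v1) j - (I0.transpose.mulVec v0) j := by
      intro v1 v0
      funext j
      simp only [Matrix.mulVec, dotProduct, Fintype.sum_sum_type, Sum.elim_inl,
        Sum.elim_inr, Matrix.map_apply, hA, Matrix.of_apply, Matrix.transpose_apply,
        Rat.cast_neg, hcast1, hcast0, neg_mul]
      rw [Finset.sum_neg_distrib, ← sub_eq_add_neg]
    have hx : (A.map Rat.cast).mulVec (Sum.elim u1 u0) = 0 := by
      rw [hsplit]
      funext j
      rw [congrFun heq j, sub_self]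
      rfl
    have hxpos : ∀ t, 0 < Sum.elim u1 u0 t := by
      rintro (i | i)
      · exact hu1 i
      · exact hu0 i
    obtain ⟨q, hqpos, hq⟩ := rat_pos_solution A (Sum.elim u1 u0) hx hxpos
    -- scale to integers
    set N : ℕ := ∏ s, (q s).den with hN
    have hNpos : 0 < N := Finset.prod_pos fun s _ => (q s).pos
    set n : Fin q1 ⊕ Fin q0 → ℕ :=
      fun s => (q s).num.toNat * (N / (q s).den) with hn
    have hnum : ∀ s, (0 : ℤ) < (q s).num := fun s => Rat.num_pos.mpr (hqpos s)
    have hdvd : ∀ s, (q s).den ∣ N := fun s => Finset.dvd_prod_of_mem _ (Finset.mem_univ s)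
    have hnpos : ∀ s, 0 < n s := by
      intro s
      refine Nat.mul_pos ?_ (Nat.div_pos (Nat.le_of_dvd hNpos (hdvd s)) (q s).pos)
      have := hnum s
      omega
    have hnq : ∀ s, ((n s : ℚ)) = q s * N := by
      intro s
      have hden : ((q s).den : ℚ) ≠ 0 := Nat.cast_ne_zero.mpr (q s).pos.ne'
      have htn : (((q s).num.toNat : ℕ) : ℚ) = ((q s).num : ℚ) := by
        exact_mod_cast congrArg (Int.cast : ℤ → ℚ) (Int.toNat_of_nonneg (hnum s).le)
      have h1 : ((n s : ℚ)) = ((q s).num : ℚ) * ((N : ℚ) / ((q s).den : ℚ)) := by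
        rw [hn]
        push_cast [Nat.cast_div (hdvd s) hden]
        try rw [htn]
        try ring
      rw [h1]
      conv_rhs => rw [← Rat.num_div_den (q s)]
      field_simp
    have hnr : ∀ s, ((n s : ℝ)) = ((q s : ℝ)) * (N : ℝ) := by
      intro s
      have := congrArg (fun a : ℚ => (a : ℝ)) (hnq s)
      push_cast at this
      exact this
    -- real equation for q
    have hqr : (A.map Rat.cast).mulVec
        (Sum.elim (fun i => ((q (Sum.inl i) : ℝ))) (fun i => ((q (Sum.inr i) : ℝ)))) = 0 := by
      have helim : (Sum.elim (fun i => ((q (Sum.inl i) : ℝ))) (fun i => ((q (Sum.inr i) : ℝ))))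
          = fun s => ((q s : ℝ)) := by
        funext s
        cases s <;> rfl
      rw [helim]
      funext j
      have := (Rat.castHom ℝ).map_mulVec A q j
      rw [congrFun hq j] at this
      simpa [Function.comp_def] using this.symm
    rw [hsplit] at hqr
    have hqeq : I1.transpose.mulVec (fun i => ((q (Sum.inl i) : ℝ)))
        = I0.transpose.mulVec (fun i => ((q (Sum.inr i) : ℝ))) := by
      funext j
      have := congrFun hqr j
      simpa [sub_eq_zero] using this
    refine ⟨fun i => n (Sum.inl i), fun i => n (Sum.inr i),
      fun i => hnpos _, fun i => hnpos _, ?_⟩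
    have hv1 : (fun i => ((n (Sum.inl i) : ℝ)))
        = (N : ℝ) • (fun i => ((q (Sum.inl i) : ℝ))) := by
      funext i
      rw [hnr]
      simp [mul_comm]
    have hv0 : (fun i => ((n (Sum.inr i) : ℝ)))
        = (N : ℝ) • (fun i => ((q (Sum.inr i) : ℝ))) := by
      funext i
      rw [hnr]
      simp [mul_comm]
    rw [hv1, hv0, Matrix.mulVec_smul, Matrix.mulVec_smul, hqeq]
  · rintro ⟨nplus, nstar, h1, h0, heq⟩
    exact ⟨fun i => (nplus i : ℝ), fun i => (nstar i : ℝ),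
      fun i => by show (0:ℝ) < (nplus i : ℝ); exact_mod_cast h1 i,
      fun i => by show (0:ℝ) < (nstar i : ℝ); exact_mod_cast h0 i, heq⟩
end

section
/- Let I be a full-rank q×(p+1) real matrix whose first column is all ones, 𝙸 its last p columns, n̄⁰ ∈ (ℝ₊*)^q with ∑ n̄⁰_i = 1, and m ∈ ℝ^p. If there exists λ ∈ (ℝ₊*)^q with ∑_i λ_i = 1 and 𝙸^T λ = m, then the function β̃ ↦ log(∑_i n̄⁰_i e^{(𝙸β̃)_i}) − m·β̃ is coercive on ℝ^p (it tends to +∞ as ‖β̃‖ → ∞). -/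
/-- Coercivity: if `m` lies in the open convex hull of the rows of `𝙸` (i.e. `𝙸ᵀ λ = m` for
some strictly positive probability vector `λ`), then
`β̃ ↦ log (∑ i, n̄⁰ i e^{(𝙸β̃) i}) − m·β̃` tends to `+∞` as `‖β̃‖ → ∞`. -/
theorem coercive_of_strong_overlap (p q : ℕ)
    (I : Matrix (Fin q) (Fin (p + 1)) ℝ)
    (hrank : Function.Injective I.mulVec)
    (hones : ∀ i, I i 0 = 1)
    (n0 : Fin q → ℝ) (hn0 : ∀ i, 0 < n0 i) (hsum : ∑ i, n0 i = 1)
    (m : Fin p → ℝ)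
    (lam : Fin q → ℝ) (hlam : ∀ i, 0 < lam i) (hlamsum : ∑ i, lam i = 1)
    (hlamI : ∀ j : Fin p, ∑ i, I i j.succ * lam i = m j) :
    ∀ M : ℝ, ∃ R : ℝ, ∀ β : Fin p → ℝ, R ≤ ‖β‖ →
      M ≤ Real.log (∑ i, n0 i * Real.exp (∑ j : Fin p, I i j.succ * β j))
            - ∑ j, m j * β j := by
  intro M
  have hq0 : q ≠ 0 := by rintro rfl; simp at hlamsum
  have hq : (Finset.univ : Finset (Fin q)).Nonempty :=
    Finset.univ_nonempty_iff.mpr (Fin.pos_iff_nonempty.mp (Nat.pos_of_ne_zero hq0))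
  rcases Nat.eq_zero_or_pos p with hp | hp
  · subst hp
    refine ⟨1, fun β hβ => ?_⟩
    have hβ0 : β = 0 := Subsingleton.elim _ _
    rw [hβ0, norm_zero] at hβ
    linarith
  -- a i β
  set a : Fin q → (Fin p → ℝ) → ℝ := fun i β => ∑ j, (I i j.succ - m j) * β j with ha
  set g : (Fin p → ℝ) → ℝ := fun β => Finset.univ.sup' hq (fun i => a i β) with hg
  -- sum identity
  have hsum0 : ∀ β : Fin p → ℝ, ∑ i, lam i * a i β = 0 := by
    intro β
    have hj : ∀ j : Fin p, ∑ i, lam i * ((I i j.succ - m j) * β j) = 0 := by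
      intro j
      calc ∑ i, lam i * ((I i j.succ - m j) * β j)
          = (∑ i, I i j.succ * lam i) * β j - (∑ i, lam i) * (m j * β j) := by
            rw [Finset.sum_mul, Finset.sum_mul, ← Finset.sum_sub_distrib]
            exact Finset.sum_congr rfl fun i _ => by ring
        _ = 0 := by rw [hlamI j, hlamsum]; ring
    simp only [ha, Finset.mul_sum]
    rw [Finset.sum_comm]
    simp [hj]
  -- if all a i β = 0 then β = 0
  have hzero : ∀ β : Fin p → ℝ, (∀ i, a i β = 0) → β = 0 := by
    intro β hβ
    have hx : ∀ i, ∑ j, I i j.succ * β j = ∑ j, m j * β j := by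
      intro i
      have := hβ i
      simp only [ha] at this
      have h2 : ∑ j, (I i j.succ - m j) * β j
          = ∑ j, I i j.succ * β j - ∑ j, m j * β j := by
        rw [← Finset.sum_sub_distrib]; exact Finset.sum_congr rfl fun j _ => by ring
      linarith [h2 ▸ this]
    set c₀ : ℝ := ∑ j, m j * β j with hc₀
    set v : Fin (p + 1) → ℝ := Fin.cons (-c₀) β with hv
    have hmv : I.mulVec v = I.mulVec 0 := by
      funext i
      simp only [Matrix.mulVec_zero, Pi.zero_apply, Matrix.mulVec, dotProduct]
      rw [Fin.sum_univ_succ]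
      simp only [hv, Fin.cons_zero, Fin.cons_succ, hones i]
      rw [hx i]
      simp
    have hv0 : v = 0 := hrank hmv
    funext j
    have : v j.succ = 0 := by rw [hv0]; rfl
    simpa [hv] using this
  -- positivity of g off 0
  have hpos : ∀ β : Fin p → ℝ, β ≠ 0 → 0 < g β := by
    intro β hβ
    by_contra hle
    push_neg at hle
    have hai : ∀ i, a i β ≤ 0 := fun i =>
      le_trans (Finset.le_sup' (fun i => a i β) (Finset.mem_univ i)) hle
    have hterm : ∀ i ∈ Finset.univ, 0 ≤ lam i * (-(a i β)) := fun i _ =>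
      mul_nonneg (hlam i).le (neg_nonneg.mpr (hai i))
    have hsum' : ∑ i, lam i * (-(a i β)) = 0 := by
      have := hsum0 β
      rw [← neg_eq_zero, ← Finset.sum_neg_distrib] at this
      simpa [mul_comm, mul_neg] using this
    have hall : ∀ i ∈ Finset.univ, lam i * (-(a i β)) = 0 :=
      (Finset.sum_eq_zero_iff_of_nonneg hterm).mp hsum'
    have : ∀ i, a i β = 0 := by
      intro i
      have := hall i (Finset.mem_univ i)
      rcases mul_eq_zero.mp this with h | h
      · exact absurd h (hlam i).ne'
      · linarith [neg_eq_zero.mp h]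
    exact hβ (hzero β this)
  -- continuity of g
  have hcont : Continuous g := by
    apply Continuous.finset_sup'_apply hq
    intro i _
    exact continuous_finset_sum _ fun j _ => (continuous_const.mul (continuous_apply j))
  -- min over sphere
  haveI : Nonempty (Fin p) := Fin.pos_iff_nonempty.mp hp
  have hSne : (Metric.sphere (0 : Fin p → ℝ) 1).Nonempty :=
    NormedSpace.sphere_nonempty.mpr zero_le_one
  obtain ⟨u, huS, hmin⟩ := (isCompact_sphere (0 : Fin p → ℝ) 1).exists_isMinOn hSne
    hcont.continuousOn
  have hu1 : ‖u‖ = 1 := mem_sphere_zero_iff_norm.mp huS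
  have hεpos : 0 < g u := hpos u (by intro h; rw [h, norm_zero] at hu1; norm_num at hu1)
  set ε := g u with hε
  -- homogeneity lower bound
  have hlow : ∀ β : Fin p → ℝ, β ≠ 0 → ε * ‖β‖ ≤ g β := by
    intro β hβ
    have hnβ : (0:ℝ) < ‖β‖ := norm_pos_iff.mpr hβ
    set u' : Fin p → ℝ := ‖β‖⁻¹ • β with hu'
    have hu'S : u' ∈ Metric.sphere (0 : Fin p → ℝ) 1 := by
      rw [mem_sphere_zero_iff_norm, hu', norm_smul, norm_inv, norm_norm,
        inv_mul_cancel₀ hnβ.ne']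
    obtain ⟨i, _, hi⟩ := Finset.exists_mem_eq_sup' hq (fun i => a i u')
    have hscale : a i β = ‖β‖ * a i u' := by
      simp only [ha, hu', Pi.smul_apply, smul_eq_mul, Finset.mul_sum]
      exact Finset.sum_congr rfl fun j _ => by field_simp
    calc ε * ‖β‖ = ‖β‖ * ε := mul_comm _ _
      _ ≤ ‖β‖ * g u' := by
          apply mul_le_mul_of_nonneg_left (hmin hu'S) hnβ.le
      _ = ‖β‖ * a i u' := by
          have hgu' : g u' = a i u' := hi
          rw [hgu']
      _ = a i β := hscale.symm
      _ ≤ g β := Finset.le_sup' (fun i => a i β) (Finset.mem_univ i)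
  -- lower bound on objective
  set c : ℝ := Finset.univ.inf' hq (fun i => Real.log (n0 i)) with hc
  have hmain : ∀ β : Fin p → ℝ,
      c + g β ≤ Real.log (∑ i, n0 i * Real.exp (∑ j : Fin p, I i j.succ * β j))
        - ∑ j, m j * β j := by
    intro β
    obtain ⟨i₀, _, hi₀⟩ := Finset.exists_mem_eq_sup' hq (fun i => a i β)
    have hterm : n0 i₀ * Real.exp (∑ j, I i₀ j.succ * β j)
        ≤ ∑ i, n0 i * Real.exp (∑ j, I i j.succ * β j) :=
      Finset.single_le_sum (f := fun i => n0 i * Real.exp (∑ j, I i j.succ * β j))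
        (fun i _ => (mul_pos (hn0 i) (Real.exp_pos _)).le) (Finset.mem_univ i₀)
    have hpos' : 0 < n0 i₀ * Real.exp (∑ j, I i₀ j.succ * β j) :=
      mul_pos (hn0 i₀) (Real.exp_pos _)
    have hlog : Real.log (n0 i₀) + ∑ j, I i₀ j.succ * β j
        ≤ Real.log (∑ i, n0 i * Real.exp (∑ j, I i j.succ * β j)) := by
      have := Real.log_le_log hpos' hterm
      rwa [Real.log_mul (hn0 i₀).ne' (Real.exp_pos _).ne', Real.log_exp] at this
    have hcle : c ≤ Real.log (n0 i₀) :=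
      Finset.inf'_le (fun i => Real.log (n0 i)) (Finset.mem_univ i₀)
    have hgb : g β = ∑ j, I i₀ j.succ * β j - ∑ j, m j * β j := by
      have h1 : g β = a i₀ β := hi₀
      rw [h1]
      simp only [ha]
      rw [← Finset.sum_sub_distrib]
      exact Finset.sum_congr rfl fun j _ => by ring
    rw [hgb]
    linarith
  refine ⟨max 1 ((M - c) / ε), fun β hβ => ?_⟩
  have h1 : (1:ℝ) ≤ ‖β‖ := le_trans (le_max_left _ _) hβ
  have hβ0 : β ≠ 0 := by
    intro h; rw [h, norm_zero] at h1; linarith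
  have h2 : (M - c) / ε ≤ ‖β‖ := le_trans (le_max_right _ _) hβ
  have h3 : M - c ≤ ε * ‖β‖ := by
    rw [div_le_iff₀ hεpos] at h2; linarith [h2]
  linarith [hmain β, hlow β hβ0]
end

section
/- Under the strong overlap condition (existence of λ ∈ (ℝ₊*)^q with ∑λ_i = 1 and 𝙸^T λ = N̄¹), the limit imbalanced equations 𝙸^T(n̄⁰ e^{𝙸β̃} / ∑_i n̄⁰_i e^{(𝙸β̃)_i}) = N̄¹ have a unique solution β̃ ∈ ℝ^p; it is the unique maximizer of β̃ ↦ N̄¹·β̃ − log(∑_i n̄⁰_i e^{(𝙸β̃)_i}). -/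
lemma aux_inj (p q : ℕ) (I : Matrix (Fin q) (Fin (p + 1)) ℝ)
    (hrank : Function.Injective I.mulVec) (hones : ∀ i, I i 0 = 1)
    (d : Fin p → ℝ) (c : ℝ) (h : ∀ i, ∑ k, I i k.succ * d k = c) : d = 0 := by
  have hv : I.mulVec (Fin.cons (-c) d) = I.mulVec 0 := by
    funext i
    simp only [Matrix.mulVec, dotProduct, Matrix.mulVec_zero]
    rw [Fin.sum_univ_succ]
    simp only [Fin.cons_zero, Fin.cons_succ, hones, h i]
    simp
  have := hrank hv
  funext k
  have := congrFun this k.succ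
  simpa using this

lemma aux_key (p q : ℕ) (I : Matrix (Fin q) (Fin (p + 1)) ℝ)
    (hrank : Function.Injective I.mulVec) (hones : ∀ i, I i 0 = 1)
    (n0 : Fin q → ℝ) (hn0 : ∀ i, 0 < n0 i) (hq : Nonempty (Fin q))
    (N1 : Fin p → ℝ) (β γ : Fin p → ℝ)
    (heq : ∀ j : Fin p,
        (∑ i, I i j.succ * (n0 i * Real.exp (∑ k : Fin p, I i k.succ * β k))) /
          (∑ i, n0 i * Real.exp (∑ k : Fin p, I i k.succ * β k)) = N1 j)
    (hne : γ ≠ β) :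
    (∑ j, N1 j * γ j) - Real.log (∑ i, n0 i * Real.exp (∑ k : Fin p, I i k.succ * γ k))
      < (∑ j, N1 j * β j)
        - Real.log (∑ i, n0 i * Real.exp (∑ k : Fin p, I i k.succ * β k)) := by
  set Lb : Fin q → ℝ := fun i => ∑ k : Fin p, I i k.succ * β k with hLb
  set Lg : Fin q → ℝ := fun i => ∑ k : Fin p, I i k.succ * γ k with hLg
  set Sb : ℝ := ∑ i, n0 i * Real.exp (Lb i) with hSb
  set Sg : ℝ := ∑ i, n0 i * Real.exp (Lg i) with hSg
  have hSbpos : 0 < Sb :=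
    Finset.sum_pos (fun i _ => mul_pos (hn0 i) (Real.exp_pos _)) Finset.univ_nonempty
  have hSgpos : 0 < Sg :=
    Finset.sum_pos (fun i _ => mul_pos (hn0 i) (Real.exp_pos _)) Finset.univ_nonempty
  set w : Fin q → ℝ := fun i => n0 i * Real.exp (Lb i) / Sb with hw
  have hwpos : ∀ i, 0 < w i := fun i => by
    have := hn0 i; positivity
  have hwsum : ∑ i, w i = 1 := by
    rw [hw, ← Finset.sum_div, ← hSb, div_self hSbpos.ne']
  set d : Fin q → ℝ := fun i => Lg i - Lb i with hd
  -- the d i are not all equal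
  have hnc : ∃ j ∈ Finset.univ, ∃ k ∈ (Finset.univ : Finset (Fin q)), d j ≠ d k := by
    by_contra hcon
    push_neg at hcon
    obtain ⟨i0⟩ := hq
    have h0 : (fun k => γ k - β k) = 0 := by
      apply aux_inj p q I hrank hones _ (d i0)
      intro i
      have : d i = d i0 := hcon i (Finset.mem_univ i) i0 (Finset.mem_univ i0)
      rw [← this, hd]
      simp only [hLg, hLb, mul_sub, Finset.sum_sub_distrib]
    apply hne
    funext k
    have := congrFun h0 k
    simpa [sub_eq_zero] using this
  have jensen : Real.exp (∑ i, w i • d i) < ∑ i, w i • Real.exp (d i) :=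
    strictConvexOn_exp.map_sum_lt (fun i _ => hwpos i) hwsum
      (fun i _ => Set.mem_univ _) hnc
  simp only [smul_eq_mul] at jensen
  have hrhs : ∑ i, w i * Real.exp (d i) = Sg / Sb := by
    rw [hSg, Finset.sum_div]
    refine Finset.sum_congr rfl fun i _ => ?_
    rw [hw, hd]
    rw [div_mul_eq_mul_div, mul_assoc, ← Real.exp_add]
    ring_nf
  have hlhs : ∑ i, w i * d i = ∑ j, N1 j * (γ j - β j) := by
    have hswap : ∑ i, w i * d i
        = ∑ j : Fin p, (∑ i, w i * I i j.succ) * (γ j - β j) := by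
      simp only [hd, hLg, hLb, ← Finset.sum_sub_distrib, ← mul_sub,
        Finset.mul_sum, Finset.sum_mul]
      rw [Finset.sum_comm]
      exact Finset.sum_congr rfl fun j _ => Finset.sum_congr rfl fun i _ => by ring
    rw [hswap]
    refine Finset.sum_congr rfl fun j _ => ?_
    have : ∑ i, w i * I i j.succ = N1 j := by
      rw [← heq j, Finset.sum_div]
      exact Finset.sum_congr rfl fun i _ => by rw [hw]; ring
    rw [this]
  rw [hlhs, hrhs] at jensen
  have hlog : ∑ j, N1 j * (γ j - β j) < Real.log Sg - Real.log Sb := by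
    have := Real.log_lt_log (Real.exp_pos _) jensen
    rwa [Real.log_exp, Real.log_div hSgpos.ne' hSbpos.ne'] at this
  have hexp : ∑ j, N1 j * (γ j - β j) = (∑ j, N1 j * γ j) - ∑ j, N1 j * β j := by
    simp [mul_sub, Finset.sum_sub_distrib]
  linarith [hlog, hexp.symm.le]

lemma aux_exists (p q : ℕ) (I : Matrix (Fin q) (Fin (p + 1)) ℝ)
    (hrank : Function.Injective I.mulVec) (hones : ∀ i, I i 0 = 1)
    (n0 : Fin q → ℝ) (hn0 : ∀ i, 0 < n0 i) (hsum : ∑ i, n0 i = 1)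
    (N1 : Fin p → ℝ)
    (lam : Fin q → ℝ) (hlam : ∀ i, 0 < lam i) (hlamsum : ∑ i, lam i = 1)
    (hlamI : ∀ j : Fin p, ∑ i, I i j.succ * lam i = N1 j) :
    ∃ β : Fin p → ℝ, ∀ j : Fin p,
        (∑ i, I i j.succ * (n0 i * Real.exp (∑ k : Fin p, I i k.succ * β k))) /
          (∑ i, n0 i * Real.exp (∑ k : Fin p, I i k.succ * β k)) = N1 j := by
  rcases Nat.eq_zero_or_pos p with hp | hp
  · exact ⟨0, fun j => absurd j.isLt (by omega)⟩
  -- q is nonempty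
  have hq0 : q ≠ 0 := by rintro rfl; simp at hsum
  have hq : Nonempty (Fin q) := ⟨⟨0, Nat.pos_of_ne_zero hq0⟩⟩
  have hqR : (0:ℝ) < q := by exact_mod_cast Nat.pos_of_ne_zero hq0
  have hpne : Nonempty (Fin p) := ⟨⟨0, hp⟩⟩
  -- abbreviations
  set L : (Fin p → ℝ) → Fin q → ℝ := fun β i => ∑ k : Fin p, I i k.succ * β k with hLdef
  set S : (Fin p → ℝ) → ℝ := fun β => ∑ i, n0 i * Real.exp (L β i) with hSdef
  set f : (Fin p → ℝ) → ℝ := fun β => Real.log (S β) - ∑ j, N1 j * β j with hfdef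
  have hSpos : ∀ β, 0 < S β := fun β =>
    Finset.sum_pos (fun i _ => mul_pos (hn0 i) (Real.exp_pos _)) Finset.univ_nonempty
  have hLcont : ∀ i, Continuous (fun β => L β i) := fun i =>
    continuous_finset_sum _ fun k _ => continuous_const.mul (continuous_apply k)
  have hScont : Continuous S :=
    continuous_finset_sum _ fun i _ => continuous_const.mul (hLcont i).rexp
  have hfcont : Continuous f :=
    (hScont.log fun β => (hSpos β).ne').sub
      (continuous_finset_sum _ fun j _ => continuous_const.mul (continuous_apply j))
  -- linear identity : ∑ N1 j * β j = ∑ i, lam i * L β i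
  have hlin : ∀ β : Fin p → ℝ, ∑ j, N1 j * β j = ∑ i, lam i * L β i := by
    intro β
    simp only [hLdef, Finset.mul_sum]
    rw [Finset.sum_comm]
    refine Finset.sum_congr rfl fun j _ => ?_
    rw [← hlamI j, Finset.sum_mul]
    exact Finset.sum_congr rfl fun i _ => by ring
  -- the ℓ¹ deviation function
  set h : (Fin p → ℝ) → ℝ := fun β => ∑ i, |L β i - (∑ i', L β i') / q| with hhdef
  obtain ⟨im, _, hminim⟩ := Finset.exists_min_image Finset.univ lam Finset.univ_nonempty
  set m := lam im with hm
  have hm0 : 0 < m := hlam im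
  have hmle : ∀ i, m ≤ lam i := fun i => hminim i (Finset.mem_univ i)
  set B1 : ℝ := ∑ i, |Real.log (n0 i)| with hB1
  have hcoer : ∀ β, -B1 + (m/4) * h β ≤ f β := by
    intro β
    set c : Fin q → ℝ := fun i => L β i with hc
    set cb : ℝ := (∑ i', c i') / q with hcb
    set σ : Fin q → ℝ := fun i => if cb ≤ c i then 1 else -1 with hσ
    set s : ℝ := ∑ i, σ i with hs
    have hσabs : ∀ i, |σ i| = 1 := fun i => by
      by_cases hi : cb ≤ c i <;> simp [hσ, hi]
    have hsabs : |s| ≤ q := by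
      calc |s| ≤ ∑ i, |σ i| := Finset.abs_sum_le_sum_abs _ _
      _ = q := by simp [hσabs, Finset.card_univ]
    set lam' : Fin q → ℝ := fun i => lam i + (m/4) * (σ i - s/q) with hlam'
    have hdiff : ∀ i, |σ i - s/q| ≤ 2 := fun i => by
      have h1 : |s/q| ≤ 1 := by
        rw [abs_div, abs_of_pos hqR]; exact div_le_one_of_le₀ hsabs hqR.le
      calc |σ i - s/q| ≤ |σ i| + |s/q| := abs_sub _ _
      _ ≤ 2 := by rw [hσabs i]; linarith
    have hb : ∀ i, |(m/4) * (σ i - s/q)| ≤ m/2 := fun i => by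
      rw [abs_mul, abs_of_pos (by linarith : (0:ℝ) < m/4)]
      nlinarith [hdiff i]
    have hlam'pos : ∀ i, 0 < lam' i := fun i => by
      have h1 := (abs_le.1 (hb i)).1
      have h2 := hmle i
      simp only [hlam']; linarith
    have hsσ : ∑ i, (σ i - s/q) = 0 := by
      rw [Finset.sum_sub_distrib, Finset.sum_const, Finset.card_univ]
      simp only [← hs, Fintype.card_fin, nsmul_eq_mul]
      field_simp
      ring
    have hlam'sum : ∑ i, lam' i = 1 := by
      simp only [hlam', Finset.sum_add_distrib, ← Finset.mul_sum, hsσ, hlamsum]; ring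
    have hlam'le1 : ∀ i, lam' i ≤ 1 := fun i => by
      rw [← hlam'sum]
      exact Finset.single_le_sum (fun i _ => (hlam'pos i).le) (Finset.mem_univ i)
    -- Jensen for exp
    set u : Fin q → ℝ := fun i => Real.log (n0 i) + c i - Real.log (lam' i) with hu
    have hjen : Real.exp (∑ i, lam' i • u i) ≤ ∑ i, lam' i • Real.exp (u i) :=
      convexOn_exp.map_sum_le (fun i _ => (hlam'pos i).le) hlam'sum (fun i _ => Set.mem_univ _)
    simp only [smul_eq_mul] at hjen
    have hexpu : ∀ i, lam' i * Real.exp (u i) = n0 i * Real.exp (c i) := fun i => by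
      rw [hu]
      rw [Real.exp_sub, Real.exp_add, Real.exp_log (hn0 i), Real.exp_log (hlam'pos i),
        mul_comm, div_mul_cancel₀ _ (hlam'pos i).ne']
    have hSge : Real.exp (∑ i, lam' i * u i) ≤ S β := by
      calc Real.exp (∑ i, lam' i * u i) ≤ ∑ i, lam' i * Real.exp (u i) := hjen
      _ = S β := by rw [hSdef]; exact Finset.sum_congr rfl fun i _ => hexpu i
    have hlogS : ∑ i, lam' i * u i ≤ Real.log (S β) :=
      (Real.le_log_iff_exp_le (hSpos β)).2 hSge
    -- decompose the sum
    have hdecomp : ∑ i, lam' i * u i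
        = (∑ i, lam' i * Real.log (n0 i)) + (∑ i, lam' i * c i)
          - ∑ i, lam' i * Real.log (lam' i) := by
      simp only [hu, mul_add, mul_sub, Finset.sum_add_distrib, Finset.sum_sub_distrib]
    have hbound1 : -B1 ≤ ∑ i, lam' i * Real.log (n0 i) := by
      rw [hB1, ← Finset.sum_neg_distrib]
      refine Finset.sum_le_sum fun i _ => ?_
      nlinarith [le_abs_self (Real.log (n0 i)), neg_abs_le (Real.log (n0 i)),
        hlam'pos i, hlam'le1 i, abs_nonneg (Real.log (n0 i))]
    have hbound2 : ∑ i, lam' i * Real.log (lam' i) ≤ 0 :=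
      Finset.sum_nonpos fun i _ => mul_nonpos_of_nonneg_of_nonpos (hlam'pos i).le
        (Real.log_nonpos (hlam'pos i).le (hlam'le1 i))
    have hbound3 : ∑ i, lam' i * c i = (∑ i, lam i * c i) + (m/4) * h β := by
      have e1 : ∑ i, σ i * cb = s * cb := by
        rw [hs, Finset.sum_mul]
      have e2 : (s/q) * (∑ i', c i') = s * cb := by
        rw [hcb]; field_simp
      have e3 : ∀ i, σ i * (c i - cb) = |c i - cb| := fun i => by
        by_cases hi : cb ≤ c i
        · rw [hσ]; simp only [hi, if_true]; rw [one_mul, abs_of_nonneg (by linarith)]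
        · rw [hσ]; simp only [hi, if_false]; push_neg at hi
          rw [abs_of_neg (by linarith)]; ring
      have e4 : ∑ i, (σ i - s/q) * c i = h β := by
        have : ∑ i, (σ i - s/q) * c i = (∑ i, σ i * c i) - (s/q) * (∑ i', c i') := by
          rw [Finset.mul_sum, ← Finset.sum_sub_distrib]
          exact Finset.sum_congr rfl fun i _ => by ring
        have hhb : h β = ∑ i, |c i - cb| := rfl
        rw [this, e2, ← e1, ← Finset.sum_sub_distrib, hhb]
        refine Finset.sum_congr rfl fun i _ => ?_
        rw [← e3 i]; ring
      calc ∑ i, lam' i * c i = (∑ i, lam i * c i) + (m/4) * ∑ i, (σ i - s/q) * c i := by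
            rw [Finset.mul_sum, ← Finset.sum_add_distrib]
            exact Finset.sum_congr rfl fun i _ => by rw [hlam']; ring
      _ = (∑ i, lam i * c i) + (m/4) * h β := by rw [e4]
    have hflin : f β = Real.log (S β) - ∑ i, lam i * c i := by
      rw [hfdef]; simp only [hlin β, hc]
    rw [hflin]
    linarith [hlogS, hdecomp, hbound1, hbound2, hbound3.symm.le, hbound3.le]
  -- h is continuous
  have hhcont : Continuous h :=
    continuous_finset_sum _ fun i _ =>
      ((hLcont i).sub ((continuous_finset_sum _ fun i' _ => hLcont i').div_const _)).abs
  have hLlin : ∀ (a : ℝ) (β : Fin p → ℝ) (i : Fin q), L (a • β) i = a * L β i := by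
    intro a β i
    simp only [hLdef, Finset.mul_sum, Pi.smul_apply, smul_eq_mul]
    exact Finset.sum_congr rfl fun k _ => by ring
  have hhom : ∀ (a : ℝ) (β : Fin p → ℝ), 0 ≤ a → h (a • β) = a * h β := by
    intro a β ha
    simp only [hhdef, hLlin, Finset.mul_sum]
    refine Finset.sum_congr rfl fun i _ => ?_
    rw [← Finset.mul_sum, mul_div_assoc, ← mul_sub, abs_mul, abs_of_nonneg ha]
  have hhpos : ∀ β : Fin p → ℝ, β ≠ 0 → 0 < h β := by
    intro β hb0
    rcases (Finset.sum_nonneg fun i (_ : i ∈ Finset.univ) =>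
      abs_nonneg (L β i - (∑ i', L β i') / q)).lt_or_eq with hlt | heq0
    · exact hlt
    · exfalso
      apply hb0
      refine aux_inj p q I hrank hones β ((∑ i', L β i') / q) fun i => ?_
      have := (Finset.sum_eq_zero_iff_of_nonneg fun i (_ : i ∈ Finset.univ) =>
        abs_nonneg (L β i - (∑ i', L β i') / q)).1 heq0.symm i (Finset.mem_univ i)
      have := abs_eq_zero.1 this
      have : L β i = (∑ i', L β i') / q := by linarith
      simpa [hLdef] using this
  -- minimum of h on the unit sphere
  haveI := hpne
  have hsphne : (Metric.sphere (0 : Fin p → ℝ) 1).Nonempty := by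
    refine ⟨fun _ => 1, ?_⟩
    rw [mem_sphere_zero_iff_norm]
    simp
  obtain ⟨β0, hβ0mem, hβ0min⟩ :=
    (isCompact_sphere (0 : Fin p → ℝ) 1).exists_isMinOn hsphne hhcont.continuousOn
  have hβ0norm : ‖β0‖ = 1 := mem_sphere_zero_iff_norm.1 hβ0mem
  set ν : ℝ := h β0 with hν
  have hνpos : 0 < ν := hhpos β0 (fun h0 => by rw [h0] at hβ0norm; simp at hβ0norm)
  have hlow : ∀ β : Fin p → ℝ, ν * ‖β‖ ≤ h β := by
    intro β
    rcases eq_or_ne β 0 with rfl | hb0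
    · have : h 0 = 0 := by simp [hhdef, hLdef]
      rw [this]; simp
    · have hnb : 0 < ‖β‖ := norm_pos_iff.2 hb0
      have humem : (‖β‖⁻¹ • β) ∈ Metric.sphere (0 : Fin p → ℝ) 1 := by
        rw [mem_sphere_zero_iff_norm, norm_smul, norm_inv, norm_norm,
          inv_mul_cancel₀ hnb.ne']
      have hle : ν ≤ h (‖β‖⁻¹ • β) := hβ0min humem
      have heq : h β = ‖β‖ * h (‖β‖⁻¹ • β) := by
        rw [← hhom ‖β‖ _ (norm_nonneg β), smul_smul, mul_inv_cancel₀ hnb.ne', one_smul]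
      rw [heq]
      nlinarith [hle, hnb]
  -- f tends to infinity at cocompact
  have haux : Filter.Tendsto (fun β : Fin p → ℝ => -B1 + (m/4) * (ν * ‖β‖))
      (Filter.cocompact _) Filter.atTop := by
    apply Filter.tendsto_atTop_add_const_left
    exact (tendsto_norm_cocompact_atTop.const_mul_atTop hνpos).const_mul_atTop
      (by linarith : (0:ℝ) < m/4)
  have htend : Filter.Tendsto f (Filter.cocompact _) Filter.atTop := by
    refine Filter.tendsto_atTop_mono (fun β => ?_) haux
    have h1 := hcoer β
    have h2 := mul_le_mul_of_nonneg_left (hlow β) (by linarith : (0:ℝ) ≤ m/4)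
    linarith
  obtain ⟨βs, hmin⟩ := hfcont.exists_forall_le htend
  refine ⟨βs, fun j => ?_⟩
  set a : Fin q → ℝ := fun i => L βs i with ha
  set b : Fin q → ℝ := fun i => I i j.succ with hbdef
  set T : ℝ → ℝ := fun t => ∑ i, n0 i * Real.exp (a i + t * b i) with hT
  have hTpos : ∀ t, 0 < T t := fun t =>
    Finset.sum_pos (fun i _ => mul_pos (hn0 i) (Real.exp_pos _)) Finset.univ_nonempty
  set g : ℝ → ℝ := fun t => Real.log (T t) - (∑ j', N1 j' * βs j') - t * N1 j with hg
  have hLt : ∀ (t : ℝ) (i : Fin q), L (βs + t • (Pi.single j (1:ℝ) : Fin p → ℝ)) i = a i + t * b i := by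
    intro t i
    have e2 : ∑ k : Fin p, I i k.succ * (Pi.single j (1:ℝ) : Fin p → ℝ) k = I i j.succ := by
      rw [Finset.sum_eq_single j]
      · simp
      · intro k _ hk; rw [Pi.single_eq_of_ne hk, mul_zero]
      · intro hj; exact absurd (Finset.mem_univ j) hj
    have e : ∑ k : Fin p, I i k.succ * (βs k + t * (Pi.single j (1:ℝ) : Fin p → ℝ) k)
        = (∑ k : Fin p, I i k.succ * βs k) + t * ∑ k : Fin p, I i k.succ * (Pi.single j (1:ℝ) : Fin p → ℝ) k := by
      rw [Finset.mul_sum, ← Finset.sum_add_distrib]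
      exact Finset.sum_congr rfl fun k _ => by ring
    simp only [hLdef, Pi.add_apply, Pi.smul_apply, smul_eq_mul]
    rw [e, e2]
  have hlinpart : ∀ t : ℝ, ∑ j', N1 j' * ((βs + t • (Pi.single j (1:ℝ) : Fin p → ℝ)) j')
      = (∑ j', N1 j' * βs j') + t * N1 j := by
    intro t
    have e2 : ∑ j' : Fin p, N1 j' * (Pi.single j (1:ℝ) : Fin p → ℝ) j' = N1 j := by
      rw [Finset.sum_eq_single j]
      · simp
      · intro k _ hk; rw [Pi.single_eq_of_ne hk, mul_zero]
      · intro hj; exact absurd (Finset.mem_univ j) hj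
    have e : ∑ j' : Fin p, N1 j' * ((βs + t • (Pi.single j (1:ℝ) : Fin p → ℝ)) j')
        = (∑ j' : Fin p, N1 j' * βs j') + t * ∑ j' : Fin p, N1 j' * (Pi.single j (1:ℝ) : Fin p → ℝ) j' := by
      rw [Finset.mul_sum, ← Finset.sum_add_distrib]
      refine Finset.sum_congr rfl fun k _ => ?_
      simp only [Pi.add_apply, Pi.smul_apply, smul_eq_mul]
      ring
    rw [e, e2]
  have hgf : ∀ t : ℝ, g t = f (βs + t • (Pi.single j (1:ℝ) : Fin p → ℝ)) := by
    intro t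
    have hST : S (βs + t • (Pi.single j (1:ℝ) : Fin p → ℝ)) = T t := by
      simp only [hSdef, hT]
      exact Finset.sum_congr rfl fun i _ => by rw [hLt t i]
    simp only [hg, hfdef, hST, hlinpart t]
    ring
  have hglob : ∀ t : ℝ, g 0 ≤ g t := by
    intro t
    rw [hgf t, hgf 0]
    have h0 : βs + (0:ℝ) • (Pi.single j (1:ℝ) : Fin p → ℝ) = βs := by simp
    rw [h0]
    exact hmin _
  have hloc : IsLocalMin g 0 := Filter.Eventually.of_forall hglob
  have hTd : HasDerivAt T (∑ i, n0 i * (Real.exp (a i + 0 * b i) * b i)) 0 := by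
    rw [hT]
    refine HasDerivAt.fun_sum fun i _ => ?_
    have h1 : HasDerivAt (fun t : ℝ => a i + t * b i) (b i) 0 := by
      simpa using ((hasDerivAt_id (0:ℝ)).mul_const (b i)).const_add (a i)
    exact h1.exp.const_mul (n0 i)
  have hgd : HasDerivAt g
      ((∑ i, n0 i * (Real.exp (a i + 0 * b i) * b i)) / T 0 - N1 j) 0 := by
    have hlog := hTd.log (hTpos 0).ne'
    have hlin2 : HasDerivAt (fun t : ℝ => t * N1 j) (N1 j) 0 := by
      simpa using (hasDerivAt_id (0:ℝ)).mul_const (N1 j)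
    have := (hlog.sub_const (∑ j', N1 j' * βs j')).sub hlin2
    simpa [hg, hT, Pi.sub_def] using this
  have hD0 : (∑ i, n0 i * (Real.exp (a i + 0 * b i) * b i)) / T 0 - N1 j = 0 := by
    have h1 := hloc.deriv_eq_zero
    rw [hgd.deriv] at h1
    exact h1
  have hnum : ∑ i, n0 i * (Real.exp (a i + 0 * b i) * b i)
      = ∑ i, I i j.succ * (n0 i * Real.exp (∑ k : Fin p, I i k.succ * βs k)) := by
    refine Finset.sum_congr rfl fun i _ => ?_
    simp only [ha, hbdef, hLdef, zero_mul, add_zero]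
    ring
  have hden : T 0 = ∑ i, n0 i * Real.exp (∑ k : Fin p, I i k.succ * βs k) := by
    rw [hT]
    refine Finset.sum_congr rfl fun i _ => ?_
    simp only [ha, hLdef, zero_mul, add_zero]
  rw [← hnum, ← hden]
  linarith [hD0]

/-- Under the strong overlap condition, the limit imbalanced equations have a unique
solution `β̃ ∈ ℝ^p`, and this solution is the unique maximizer of
`β̃ ↦ N̄¹·β̃ − log (∑ i, n̄⁰ i e^{(𝙸β̃) i})`. -/
theorem limit_imbalanced_existence_uniqueness (p q : ℕ)
    (I : Matrix (Fin q) (Fin (p + 1)) ℝ)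
    (hrank : Function.Injective I.mulVec)
    (hones : ∀ i, I i 0 = 1)
    (n0 : Fin q → ℝ) (hn0 : ∀ i, 0 < n0 i) (hsum : ∑ i, n0 i = 1)
    (N1 : Fin p → ℝ)
    (lam : Fin q → ℝ) (hlam : ∀ i, 0 < lam i) (hlamsum : ∑ i, lam i = 1)
    (hlamI : ∀ j : Fin p, ∑ i, I i j.succ * lam i = N1 j) :
    (∃! β : Fin p → ℝ, ∀ j : Fin p,
        (∑ i, I i j.succ * (n0 i * Real.exp (∑ k : Fin p, I i k.succ * β k))) /
          (∑ i, n0 i * Real.exp (∑ k : Fin p, I i k.succ * β k)) = N1 j) ∧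
    (∀ β : Fin p → ℝ,
      (∀ j : Fin p,
        (∑ i, I i j.succ * (n0 i * Real.exp (∑ k : Fin p, I i k.succ * β k))) /
          (∑ i, n0 i * Real.exp (∑ k : Fin p, I i k.succ * β k)) = N1 j) →
      ∀ γ : Fin p → ℝ, γ ≠ β →
        (∑ j, N1 j * γ j) - Real.log (∑ i, n0 i * Real.exp (∑ k : Fin p, I i k.succ * γ k))
          < (∑ j, N1 j * β j)
            - Real.log (∑ i, n0 i * Real.exp (∑ k : Fin p, I i k.succ * β k))) := by
  have hq0 : q ≠ 0 := by rintro rfl; simp at hsum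
  have hq : Nonempty (Fin q) := ⟨⟨0, Nat.pos_of_ne_zero hq0⟩⟩
  obtain ⟨βs, hβs⟩ := aux_exists p q I hrank hones n0 hn0 hsum N1 lam hlam hlamsum hlamI
  constructor
  · refine ⟨βs, hβs, fun β' hβ' => ?_⟩
    by_contra hne
    have h1 := aux_key p q I hrank hones n0 hn0 hq N1 βs β' hβs hne
    have h2 := aux_key p q I hrank hones n0 hn0 hq N1 β' βs hβ' (Ne.symm hne)
    linarith
  · intro β hβ γ hγ
    exact aux_key p q I hrank hones n0 hn0 hq N1 β γ hβ hγ
end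

section
/- Lasso path for one independent binary predictor: the solution of e^{β(t)} b/(e^{β(t)} b + 1 − b) = N̄ − t·sign(β(t)) (with β(t) = 0 for t ≥ |N̄ − b|) is β(t) = log((N̄ − t·sign(β(0)))/(1 − N̄ + t·sign(β(0)))) − log(b/(1−b)) for t ∈ [0, |N̄ − b|], where β(0) = log(N̄(1−b)/((1−N̄)b)). This path is continuous and monotone towards 0, and equals β(0) + log((1 − t·sign(β(0))/N̄)/(1 + t·sign(β(0))/(1−N̄))). -/
lemma logratio_mono (x y : ℝ) (hx0 : 0 < x) (hy1 : y < 1) (hxy : x ≤ y) :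
    Real.log (x / (1 - x)) ≤ Real.log (y / (1 - y)) := by
  have hy0 : 0 < y := lt_of_lt_of_le hx0 hxy
  have hx1 : x < 1 := lt_of_le_of_lt hxy hy1
  have h1x : 0 < 1 - x := by linarith
  have h1y : 0 < 1 - y := by linarith
  apply Real.log_le_log (by positivity)
  rw [div_le_div_iff₀ h1x h1y]
  nlinarith

/-- Lasso path for one independent binary predictor: with `s = sign(N̄ − b)`, the path
`β(t) = log ((N̄ − t s)/(1 − N̄ + t s)) − log (b/(1−b))` solves
`e^{β(t)} b/(e^{β(t)} b + 1 − b) = N̄ − t s` on `[0, |N̄ − b|]`, starts at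
`β(0) = log (N̄(1−b)/((1−N̄)b))`, vanishes at `t = |N̄ − b|`, is continuous and monotone
towards `0`, and equals `β(0) + log ((1 − t s/N̄)/(1 + t s/(1−N̄)))`. -/
theorem lasso_path_one_predictor (b N s : ℝ) (hb : b ∈ Set.Ioo (0:ℝ) 1)
    (hN : N ∈ Set.Ioo (0:ℝ) 1) (hne : b ≠ N)
    (hs : (s = 1 ∧ b < N) ∨ (s = -1 ∧ N < b))
    (β : ℝ → ℝ)
    (hβ : ∀ t, β t = Real.log ((N - t * s) / (1 - N + t * s)) - Real.log (b / (1 - b))) :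
    (∀ t ∈ Set.Icc (0:ℝ) |N - b|,
        Real.exp (β t) * b / (Real.exp (β t) * b + (1 - b)) = N - t * s) ∧
    β 0 = Real.log (N * (1 - b) / ((1 - N) * b)) ∧
    β |N - b| = 0 ∧
    ContinuousOn β (Set.Icc (0:ℝ) |N - b|) ∧
    (∀ t₁ ∈ Set.Icc (0:ℝ) |N - b|, ∀ t₂ ∈ Set.Icc (0:ℝ) |N - b|,
        t₁ ≤ t₂ → |β t₂| ≤ |β t₁|) ∧
    (∀ t ∈ Set.Icc (0:ℝ) |N - b|,
        β t = β 0 + Real.log ((1 - t * s / N) / (1 + t * s / (1 - N)))) := by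
  obtain ⟨hb0, hb1⟩ := hb
  obtain ⟨hN0, hN1⟩ := hN
  have hss : s * s = 1 := by rcases hs with ⟨h, _⟩ | ⟨h, _⟩ <;> subst h <;> norm_num
  have habs : |N - b| = (N - b) * s := by
    rcases hs with ⟨h, hlt⟩ | ⟨h, hlt⟩ <;> subst h
    · rw [abs_of_pos (by linarith)]; ring
    · rw [abs_of_neg (by linarith)]; ring
  -- bounds on u = N - t s on the interval
  have key : ∀ t ∈ Set.Icc (0:ℝ) |N - b|, 0 < N - t * s ∧ 0 < 1 - N + t * s := by
    intro t ht
    obtain ⟨ht0, ht1⟩ := ht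
    rw [habs] at ht1
    rcases hs with ⟨h, hlt⟩ | ⟨h, hlt⟩ <;> subst h <;>
      constructor <;> nlinarith
  -- 1) path equation
  have part1 : ∀ t ∈ Set.Icc (0:ℝ) |N - b|,
      Real.exp (β t) * b / (Real.exp (β t) * b + (1 - b)) = N - t * s := by
    intro t ht
    obtain ⟨hu0, hu1⟩ := key t ht
    have h1b : 0 < 1 - b := by linarith
    rw [hβ t, Real.exp_sub,
      Real.exp_log (by positivity : (0:ℝ) < (N - t * s) / (1 - N + t * s)),
      Real.exp_log (by positivity : (0:ℝ) < b / (1 - b))]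
    have hden : (N - t * s) / (1 - N + t * s) / (b / (1 - b)) * b + (1 - b)
        = (1 - b) * (1 + t * s - N + N - t * s) / (1 - N + t * s) := by
      field_simp
      ring
    rw [hden]
    have : (1 + t * s - N + N - t * s) = 1 := by ring
    rw [this]
    field_simp
  -- 2) value at 0
  have part2 : β 0 = Real.log (N * (1 - b) / ((1 - N) * b)) := by
    have h1b : 0 < 1 - b := by linarith
    have h1N : 0 < 1 - N := by linarith
    rw [hβ 0]
    norm_num
    rw [Real.log_div (ne_of_gt hN0) (ne_of_gt h1N),
      Real.log_div (ne_of_gt hb0) (ne_of_gt h1b),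
      Real.log_div (mul_ne_zero (ne_of_gt hN0) (ne_of_gt h1b))
        (mul_ne_zero (ne_of_gt h1N) (ne_of_gt hb0)),
      Real.log_mul (ne_of_gt hN0) (ne_of_gt h1b),
      Real.log_mul (ne_of_gt h1N) (ne_of_gt hb0)]
    ring
  -- 3) value at |N - b|
  have part3 : β |N - b| = 0 := by
    rw [hβ, habs]
    have h1 : N - (N - b) * s * s = b := by rw [mul_assoc, hss]; ring
    have h2 : 1 - N + (N - b) * s * s = 1 - b := by rw [mul_assoc, hss]; ring
    rw [h1, h2, sub_self]
  -- 4) continuity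
  have part4 : ContinuousOn β (Set.Icc (0:ℝ) |N - b|) := by
    have hfun : β = fun t => Real.log ((N - t * s) / (1 - N + t * s)) -
        Real.log (b / (1 - b)) := funext hβ
    rw [hfun]
    apply ContinuousOn.sub _ continuousOn_const
    apply ContinuousOn.log
    · apply ContinuousOn.div
      · fun_prop
      · fun_prop
      · intro t ht
        exact ne_of_gt (key t ht).2
    · intro t ht
      obtain ⟨hu0, hu1⟩ := key t ht
      positivity
  -- 5) monotonicity towards 0
  have part5 : ∀ t₁ ∈ Set.Icc (0:ℝ) |N - b|, ∀ t₂ ∈ Set.Icc (0:ℝ) |N - b|,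
      t₁ ≤ t₂ → |β t₂| ≤ |β t₁| := by
    intro t₁ ht₁ t₂ ht₂ h12
    obtain ⟨hu10, hu11⟩ := key t₁ ht₁
    obtain ⟨hu20, hu21⟩ := key t₂ ht₂
    have hm1 : 1 - N + t₁ * s = 1 - (N - t₁ * s) := by ring
    have hm2 : 1 - N + t₂ * s = 1 - (N - t₂ * s) := by ring
    rcases hs with ⟨h, hlt⟩ | ⟨h, hlt⟩ <;> subst h
    · -- s = 1 : β ≥ 0 and decreasing
      have hble1 : b ≤ N - t₁ * 1 := by
        rw [habs] at ht₁; nlinarith [ht₁.2]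
      have hble2 : b ≤ N - t₂ * 1 := by
        rw [habs] at ht₂; nlinarith [ht₂.2]
      have hlt1 : N - t₁ * 1 < 1 := by linarith
      have hnn1 : 0 ≤ β t₁ := by
        rw [hβ, hm1]
        have := logratio_mono b (N - t₁ * 1) hb0 hlt1 hble1
        linarith
      have hnn2 : 0 ≤ β t₂ := by
        rw [hβ, hm2]
        have hlt2 : N - t₂ * 1 < 1 := by linarith
        have := logratio_mono b (N - t₂ * 1) hb0 hlt2 hble2
        linarith
      rw [abs_of_nonneg hnn1, abs_of_nonneg hnn2, hβ, hβ, hm1, hm2]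
      have := logratio_mono (N - t₂ * 1) (N - t₁ * 1) hu20 hlt1 (by linarith)
      linarith
    · -- s = -1 : β ≤ 0 and increasing
      have hble1 : N - t₁ * (-1) ≤ b := by
        rw [habs] at ht₁; nlinarith [ht₁.2]
      have hble2 : N - t₂ * (-1) ≤ b := by
        rw [habs] at ht₂; nlinarith [ht₂.2]
      have hltb : b < 1 := hb1
      have hnp1 : β t₁ ≤ 0 := by
        rw [hβ, hm1]
        have := logratio_mono (N - t₁ * (-1)) b hu10 hltb hble1
        linarith
      have hnp2 : β t₂ ≤ 0 := by
        rw [hβ, hm2]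
        have := logratio_mono (N - t₂ * (-1)) b hu20 hltb hble2
        linarith
      rw [abs_of_nonpos hnp1, abs_of_nonpos hnp2, hβ, hβ, hm1, hm2]
      have hlt2 : N - t₂ * (-1) < 1 := by linarith
      have := logratio_mono (N - t₁ * (-1)) (N - t₂ * (-1)) hu10 hlt2 (by nlinarith)
      linarith
  -- 6) alternative expression
  have part6 : ∀ t ∈ Set.Icc (0:ℝ) |N - b|,
      β t = β 0 + Real.log ((1 - t * s / N) / (1 + t * s / (1 - N))) := by
    intro t ht
    obtain ⟨hu0, hu1⟩ := key t ht
    have h1b : 0 < 1 - b := by linarith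
    have h1N : 0 < 1 - N := by linarith
    have e1 : 1 - t * s / N = (N - t * s) / N := by field_simp
    have e2 : 1 + t * s / (1 - N) = (1 - N + t * s) / (1 - N) := by field_simp
    rw [hβ t, part2, e1, e2]
    rw [Real.log_div (ne_of_gt hu0) (ne_of_gt hu1),
      Real.log_div (ne_of_gt hb0) (ne_of_gt h1b),
      Real.log_div (mul_ne_zero (ne_of_gt hN0) (ne_of_gt h1b))
        (mul_ne_zero (ne_of_gt h1N) (ne_of_gt hb0)),
      Real.log_mul (ne_of_gt hN0) (ne_of_gt h1b),
      Real.log_mul (ne_of_gt h1N) (ne_of_gt hb0),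
      Real.log_div (div_ne_zero (ne_of_gt hu0) (ne_of_gt hN0))
        (div_ne_zero (ne_of_gt hu1) (ne_of_gt h1N)),
      Real.log_div (ne_of_gt hu0) (ne_of_gt hN0),
      Real.log_div (ne_of_gt hu1) (ne_of_gt h1N)]
    ring
  exact ⟨part1, part2, part3, part4, part5, part6⟩
end
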